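/- Let γ ∈ (0,1) and θ > 0 with θ = 1/γ - 1. Then as t → ∞, e^{-θt} ∫_0^t ∫_{-∞}^0 e^{θx} e^{θy} (e^{(y-x)/(2γ)} - e^{-(y-x)/(2γ)})^{2γ-2} dx dy is asymptotically equivalent to t e^{-θt}/(2θ). -/

import Mathlib

open MeasureTheory Real Set Filter intervalIntegral

lemma expIic_integrable {c : ℝ} (hc : 0 < c) :
    IntegrableOn (fun x => Real.exp (c * x)) (Iic (0:ℝ)) := by
  refine integrableOn_Iic_of_intervalIntegral_norm_bounded (1/c) 0
    (fun y : ℝ => ((Real.continuous_exp.comp (continuous_const.mul continuous_id)).intervalIntegrable y 0).1) tendsto_id ?_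
  filter_upwards [Iic_mem_atBot (0:ℝ)] with y hy
  have : ∀ x : ℝ, ‖Real.exp (c * x)‖ = Real.exp (c * x) := fun x => norm_of_nonneg (Real.exp_pos _).le
  simp_rw [this]
  rw [intervalIntegral.integral_comp_mul_left (fun x => Real.exp x) hc.ne']
  rw [mul_zero, integral_exp, smul_eq_mul]
  rw [Real.exp_zero]
  rw [one_div]
  calc c⁻¹ * (1 - Real.exp (c*y)) ≤ c⁻¹ * 1 := by
        apply mul_le_mul_of_nonneg_left (by linarith [Real.exp_pos (c*y)]) (inv_nonneg.2 hc.le)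
    _ = c⁻¹ := mul_one _

lemma expIic_integral {c : ℝ} (hc : 0 < c) :
    ∫ x in Iic (0:ℝ), Real.exp (c * x) = 1 / c := by
  have hderiv : ∀ x ∈ Iic (0:ℝ), HasDerivAt (fun x => Real.exp (c * x) / c) (Real.exp (c * x)) x := by
    intro x _
    have := ((Real.hasDerivAt_exp (c*x)).comp x ((hasDerivAt_id x).const_mul c))
    simpa [mul_comm, mul_div_assoc, mul_div_cancel_left₀ _ hc.ne'] using this.div_const c
  have htend : Tendsto (fun x => Real.exp (c * x) / c) atBot (nhds 0) := by
    have : Tendsto (fun x : ℝ => c * x) atBot atBot :=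
      Tendsto.const_mul_atBot hc tendsto_id
    simpa using (Real.tendsto_exp_atBot.comp this).div_const c
  have := integral_Iic_of_hasDerivAt_of_tendsto' hderiv (expIic_integrable hc) htend
  simpa [Real.exp_zero] using this

lemma key_identity {γ θ x y : ℝ} (hγ0 : 0 < γ) (hθγ : θ = 1/γ - 1) (hxy : x < y) :
    Real.exp (θ * x) * Real.exp (θ * y) *
      (Real.exp ((y - x) / (2 * γ)) - Real.exp (-(y - x) / (2 * γ))) ^ (2 * γ - 2)
    = Real.exp (2*θ*x) * (1 - Real.exp ((x - y)/γ)) ^ (2*γ-2) := by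
  have hγ : γ ≠ 0 := hγ0.ne'
  have ha : Real.exp ((y - x) / (2 * γ)) - Real.exp (-(y - x) / (2 * γ))
      = Real.exp ((y - x) / (2 * γ)) * (1 - Real.exp ((x - y)/γ)) := by
    rw [mul_sub, mul_one, ← Real.exp_add]
    congr 2
    field_simp
    ring
  have hB : 0 < 1 - Real.exp ((x - y)/γ) := by
    have : (x - y)/γ < 0 := div_neg_of_neg_of_pos (sub_neg.2 hxy) hγ0
    simpa using Real.exp_lt_one_iff.2 this
  rw [ha, Real.mul_rpow (Real.exp_pos _).le hB.le, ← Real.exp_mul]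
  rw [show Real.exp (θ*x) * Real.exp (θ*y) * (Real.exp ((y-x)/(2*γ) * (2*γ-2)) * (1 - Real.exp ((x-y)/γ)) ^ (2*γ-2))
      = (Real.exp (θ*x) * Real.exp (θ*y) * Real.exp ((y-x)/(2*γ) * (2*γ-2))) * (1 - Real.exp ((x-y)/γ)) ^ (2*γ-2) by ring]
  congr 1
  rw [← Real.exp_add, ← Real.exp_add]
  congr 1
  subst hθγ
  field_simp
  ring

noncomputable def gfun (γ θ : ℝ) (x y : ℝ) : ℝ :=
  Real.exp (2*θ*x) * Real.exp (Real.log (1 - Real.exp ((x-y)/γ)) * (2*γ-2))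

noncomputable def Ffun (γ θ : ℝ) (y : ℝ) : ℝ := ∫ x in Iic (0:ℝ), gfun γ θ x y

lemma base_pos {γ x y : ℝ} (hγ0 : 0 < γ) (hxy : x < y) :
    0 < 1 - Real.exp ((x-y)/γ) := by
  have : (x - y)/γ < 0 := div_neg_of_neg_of_pos (by linarith) hγ0
  simpa using Real.exp_lt_one_iff.2 this

lemma base_lt_one {γ x y : ℝ} : 1 - Real.exp ((x-y)/γ) < 1 := by
  simpa using Real.exp_pos ((x-y)/γ)

lemma gfun_eq {γ θ x y : ℝ} (hγ0 : 0 < γ) (hxy : x < y) :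
    gfun γ θ x y = Real.exp (2*θ*x) * (1 - Real.exp ((x-y)/γ)) ^ (2*γ-2) := by
  rw [gfun, Real.rpow_def_of_pos (base_pos hγ0 hxy)]

lemma gfun_pos {γ θ x y : ℝ} : 0 < gfun γ θ x y := by
  rw [gfun]; positivity

lemma gfun_meas {γ θ : ℝ} : Measurable (fun q : ℝ × ℝ => gfun γ θ q.1 q.2) := by
  unfold gfun
  exact (Real.measurable_exp.comp (measurable_fst.const_mul _)).mul
    (Real.measurable_exp.comp ((Real.measurable_log.comp
      (measurable_const.sub (Real.measurable_exp.comp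
        ((measurable_fst.sub measurable_snd).div_const γ)))).mul_const _))

lemma gfun_meas_slice {γ θ : ℝ} (y : ℝ) : Measurable (fun x : ℝ => gfun γ θ x y) := by
  unfold gfun
  exact (Real.measurable_exp.comp (measurable_id.const_mul _)).mul
    (Real.measurable_exp.comp ((Real.measurable_log.comp
      (measurable_const.sub (Real.measurable_exp.comp
        ((measurable_id.sub measurable_const).div_const γ)))).mul_const _))

lemma gfun_le {γ θ x y : ℝ} (hγ0 : 0 < γ) (hγ1 : γ < 1) (hx : x ≤ 0) (hy : 0 < y) :
    gfun γ θ x y ≤ (1 - Real.exp (-y/γ)) ^ (2*γ-2) * Real.exp (2*θ*x) := by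
  have hxy : x < y := lt_of_le_of_lt hx hy
  rw [gfun_eq hγ0 hxy]
  have hb : 0 < 1 - Real.exp (-y/γ) := by
    have := base_pos (γ := γ) (x := 0) (y := y) hγ0 hy
    simpa using this
  have hle : 1 - Real.exp (-y/γ) ≤ 1 - Real.exp ((x-y)/γ) := by
    have h1 : (x-y)/γ ≤ -y/γ := (div_le_div_iff_of_pos_right hγ0).2 (by linarith)
    have := Real.exp_le_exp.2 h1
    linarith
  have := Real.rpow_le_rpow_of_nonpos hb hle (by linarith : 2*γ-2 ≤ 0)
  calc Real.exp (2*θ*x) * (1 - Real.exp ((x-y)/γ)) ^ (2*γ-2)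
      ≤ Real.exp (2*θ*x) * (1 - Real.exp (-y/γ)) ^ (2*γ-2) :=
        mul_le_mul_of_nonneg_left this (Real.exp_pos _).le
    _ = _ := mul_comm _ _

lemma gfun_ge {γ θ x y : ℝ} (hγ0 : 0 < γ) (hγ1 : γ < 1) (hx : x ≤ 0) (hy : 0 < y) :
    Real.exp (2*θ*x) ≤ gfun γ θ x y := by
  have hxy : x < y := lt_of_le_of_lt hx hy
  rw [gfun_eq hγ0 hxy]
  have h1 : (1:ℝ) ≤ (1 - Real.exp ((x-y)/γ)) ^ (2*γ-2) :=
    Real.one_le_rpow_of_pos_of_le_one_of_nonpos (base_pos hγ0 hxy)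
      (by linarith [base_lt_one (γ := γ) (x := x) (y := y)]) (by linarith)
  nlinarith [Real.exp_pos (2*θ*x)]

lemma gfun_integrableOn {γ θ : ℝ} (hγ0 : 0 < γ) (hγ1 : γ < 1) (hθ : 0 < θ) {y : ℝ} (hy : 0 < y) :
    IntegrableOn (fun x => gfun γ θ x y) (Iic (0:ℝ)) := by
  have h2θ : 0 < 2*θ := by linarith
  refine Integrable.mono' ((expIic_integrable h2θ).const_mul ((1 - Real.exp (-y/γ)) ^ (2*γ-2)))
    ((gfun_meas_slice y).aestronglyMeasurable) ?_
  filter_upwards [ae_restrict_mem measurableSet_Iic] with x hx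
  rw [norm_of_nonneg gfun_pos.le]
  exact gfun_le hγ0 hγ1 hx hy

lemma Ffun_ge {γ θ : ℝ} (hγ0 : 0 < γ) (hγ1 : γ < 1) (hθ : 0 < θ) {y : ℝ} (hy : 0 < y) :
    1/(2*θ) ≤ Ffun γ θ y := by
  have h2θ : 0 < 2*θ := by linarith
  rw [← expIic_integral h2θ]
  exact setIntegral_mono_on (expIic_integrable h2θ) (gfun_integrableOn hγ0 hγ1 hθ hy)
    measurableSet_Iic (fun x hx => gfun_ge hγ0 hγ1 hx hy)

lemma Ffun_le {γ θ : ℝ} (hγ0 : 0 < γ) (hγ1 : γ < 1) (hθ : 0 < θ) {y : ℝ} (hy : 0 < y) :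
    Ffun γ θ y ≤ (1 - Real.exp (-y/γ)) ^ (2*γ-2) * (1/(2*θ)) := by
  have h2θ : 0 < 2*θ := by linarith
  rw [← expIic_integral h2θ, ← MeasureTheory.integral_const_mul]
  exact setIntegral_mono_on (gfun_integrableOn hγ0 hγ1 hθ hy)
    ((expIic_integrable h2θ).const_mul _)
    measurableSet_Iic (fun x hx => gfun_le hγ0 hγ1 hx hy)

lemma Ffun_meas {γ θ : ℝ} : StronglyMeasurable (Ffun γ θ) := by
  have : StronglyMeasurable (fun q : ℝ × ℝ => gfun γ θ q.2 q.1) :=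
    (gfun_meas.comp (measurable_snd.prodMk measurable_fst)).stronglyMeasurable
  exact this.integral_prod_right'

section intF
variable {γ θ : ℝ} (hγ0 : 0 < γ) (hγ1 : γ < 1) (hθ : 0 < θ)

include hγ0 hγ1 hθ in
lemma gfun_le_split {x y : ℝ} (hx : x ≤ 0) (hy : 0 < y) :
    gfun γ θ x y ≤ (1 - Real.exp (-1/γ)) ^ (2*γ-2) * Real.exp (2*θ*x)
      + (Icc (-1:ℝ) 0).indicator
          (fun x => (Real.exp (-1/γ)/γ) ^ (γ-2) * (y-x) ^ (γ-2)) x := by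
  have hxy : x < y := lt_of_le_of_lt hx hy
  have hm : 0 < Real.exp (-1/γ)/γ := div_pos (Real.exp_pos _) hγ0
  have hind : 0 ≤ (Icc (-1:ℝ) 0).indicator
      (fun x => (Real.exp (-1/γ)/γ) ^ (γ-2) * (y-x) ^ (γ-2)) x := by
    apply Set.indicator_nonneg
    intro a ha
    have h1 : (0:ℝ) ≤ y - a := by
      have : a ≤ 0 := ha.2
      linarith
    positivity
  rcases le_or_gt 1 (y - x) with h|h
  · have hb1 : 0 < 1 - Real.exp (-1/γ) := by
      have := base_pos (γ := γ) (x := -1) (y := 0) hγ0 (by norm_num)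
      simpa using this
    have hle : 1 - Real.exp (-1/γ) ≤ 1 - Real.exp ((x-y)/γ) := by
      have h1 : (x-y)/γ ≤ -1/γ := (div_le_div_iff_of_pos_right hγ0).2 (by linarith)
      have := Real.exp_le_exp.2 h1
      linarith
    have hr := Real.rpow_le_rpow_of_nonpos hb1 hle (by linarith : 2*γ-2 ≤ 0)
    have : gfun γ θ x y ≤ (1 - Real.exp (-1/γ)) ^ (2*γ-2) * Real.exp (2*θ*x) := by
      rw [gfun_eq hγ0 hxy, mul_comm]
      exact mul_le_mul_of_nonneg_right hr (Real.exp_pos _).le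
    linarith
  · have hxm : x ∈ Icc (-1:ℝ) 0 := ⟨by linarith, hx⟩
    rw [Set.indicator_of_mem hxm]
    have hBpos := base_pos hγ0 hxy
    have hB1 := base_lt_one (γ := γ) (x := x) (y := y)
    -- lower bound on the base
    have hu : 0 < (y - x)/γ := div_pos (by linarith) hγ0
    have huB : (y-x)/γ ≤ 1/γ := (div_le_div_iff_of_pos_right hγ0).2 (by linarith)
    have hexp : Real.exp (-((y-x)/γ)) ≥ Real.exp (-1/γ) := by
      apply Real.exp_le_exp.2
      rw [neg_div] at *
      linarith
    have hone : (y-x)/γ * Real.exp (-((y-x)/γ)) ≤ 1 - Real.exp (-((y-x)/γ)) := by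
      have h1 := Real.add_one_le_exp ((y-x)/γ)
      have h2 : Real.exp (-((y-x)/γ)) * Real.exp ((y-x)/γ) = 1 := by
        rw [← Real.exp_add]; simp
      nlinarith [Real.exp_pos ((y-x)/γ), Real.exp_pos (-((y-x)/γ))]
    have hbase_ge : Real.exp (-1/γ)/γ * (y-x) ≤ 1 - Real.exp ((x-y)/γ) := by
      have hxy' : (x-y)/γ = -((y-x)/γ) := by ring
      rw [hxy']
      calc Real.exp (-1/γ)/γ * (y-x) = (y-x)/γ * Real.exp (-1/γ) := by ring
        _ ≤ (y-x)/γ * Real.exp (-((y-x)/γ)) :=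
            mul_le_mul_of_nonneg_left hexp hu.le
        _ ≤ 1 - Real.exp (-((y-x)/γ)) := hone
    have hmx : 0 < Real.exp (-1/γ)/γ * (y-x) := by
      have hyx : (0:ℝ) < y - x := by linarith
      positivity
    have step1 : gfun γ θ x y ≤ (1 - Real.exp ((x-y)/γ)) ^ (2*γ-2) := by
      rw [gfun_eq hγ0 hxy]
      have := Real.exp_le_one_iff.2 (by nlinarith : 2*θ*x ≤ 0)
      nlinarith [Real.rpow_nonneg hBpos.le (2*γ-2), Real.exp_pos (2*θ*x)]
    have step2 : (1 - Real.exp ((x-y)/γ)) ^ (2*γ-2) ≤ (1 - Real.exp ((x-y)/γ)) ^ (γ-2) :=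
      Real.rpow_le_rpow_of_exponent_ge hBpos (by linarith) (by linarith)
    have step3 : (1 - Real.exp ((x-y)/γ)) ^ (γ-2) ≤ (Real.exp (-1/γ)/γ * (y-x)) ^ (γ-2) :=
      Real.rpow_le_rpow_of_nonpos hmx hbase_ge (by linarith)
    have step4 : (Real.exp (-1/γ)/γ * (y-x)) ^ (γ-2)
        = (Real.exp (-1/γ)/γ) ^ (γ-2) * (y-x) ^ (γ-2) :=
      Real.mul_rpow hm.le (by linarith)
    have hC1 : 0 ≤ (1 - Real.exp (-1/γ)) ^ (2*γ-2) * Real.exp (2*θ*x) := by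
      have hb1 : 0 < 1 - Real.exp (-1/γ) := by
        have := base_pos (γ := γ) (x := -1) (y := 0) hγ0 (by norm_num)
        simpa using this
      exact mul_nonneg (Real.rpow_nonneg hb1.le _) (Real.exp_pos _).le
    linarith [step1.trans (step2.trans (step3.trans_eq step4))]

end intF

section intF2
variable {γ θ : ℝ} (hγ0 : 0 < γ) (hγ1 : γ < 1) (hθ : 0 < θ)

include hγ0 hγ1 in
lemma rho_le {y : ℝ} (hy : 0 < y) :
    ∫ x in Icc (-1:ℝ) 0, (y-x) ^ (γ-2) ≤ y ^ (γ-1)/(1-γ) := by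
  have h0 : ∫ x in Icc (-1:ℝ) 0, (y-x) ^ (γ-2)
      = ∫ x in (-1:ℝ)..0, (y-x) ^ (γ-2) := by
    rw [MeasureTheory.integral_Icc_eq_integral_Ioc,
      intervalIntegral.integral_of_le (by norm_num : (-1:ℝ) ≤ 0)]
  have h1 : ∫ x in (-1:ℝ)..0, (y-x) ^ (γ-2)
      = ∫ x in y..(y+1), x ^ (γ-2) := by
    have := intervalIntegral.integral_comp_sub_left (a := (-1:ℝ)) (b := 0)
      (fun w => w ^ (γ-2)) y
    simpa [sub_neg_eq_add] using this
  have h2 : ∫ x in y..(y+1), x ^ (γ-2)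
      = ((y+1) ^ (γ-2+1) - y ^ (γ-2+1))/(γ-2+1) := by
    apply integral_rpow
    refine Or.inr ⟨by intro h; apply hγ1.ne; linarith [h], ?_⟩
    rw [Set.uIcc_of_le (by linarith : y ≤ y + 1)]
    intro h0mem
    exact absurd h0mem.1 (by linarith)
  have he : γ - 2 + 1 = γ - 1 := by ring
  rw [h0, h1, h2, he]
  have hpos : (0:ℝ) < 1 - γ := by linarith
  have heq : ((y+1) ^ (γ-1) - y ^ (γ-1))/(γ-1) = (y ^ (γ-1) - (y+1) ^ (γ-1))/(1-γ) := by
    rw [div_eq_div_iff (by linarith) (by linarith)]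
    ring
  rw [heq]
  apply (div_le_div_iff_of_pos_right hpos).2
  have := Real.rpow_nonneg (by linarith : (0:ℝ) ≤ y + 1) (γ-1)
  linarith

include hγ0 hγ1 hθ in
lemma ind_integrable {y : ℝ} (hy : 0 < y) :
    IntegrableOn (fun x => (Icc (-1:ℝ) 0).indicator
          (fun x => (Real.exp (-1/γ)/γ) ^ (γ-2) * (y-x) ^ (γ-2)) x) (Iic (0:ℝ)) := by
  · have hc : ContinuousOn (fun x : ℝ => (Real.exp (-1/γ)/γ) ^ (γ-2) * (y-x) ^ (γ-2))
        (Icc (-1:ℝ) 0) := by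
      apply ContinuousOn.mul continuousOn_const
      apply ContinuousOn.rpow_const ((continuous_const.sub continuous_id).continuousOn)
      intro x hx
      refine Or.inl ?_
      have hx2 := hx.2
      intro h
      simp only [Pi.sub_apply, id_eq] at h
      nlinarith
    have hint : IntegrableOn (fun x : ℝ => (Real.exp (-1/γ)/γ) ^ (γ-2) * (y-x) ^ (γ-2))
        (Icc (-1:ℝ) 0) := hc.integrableOn_compact isCompact_Icc
    exact (hint.integrable_indicator measurableSet_Icc).integrableOn

include hγ0 hγ1 hθ in
lemma bound_integrable {y : ℝ} (hy : 0 < y) :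
    IntegrableOn (fun x => (1 - Real.exp (-1/γ)) ^ (2*γ-2) * Real.exp (2*θ*x)
      + (Icc (-1:ℝ) 0).indicator
          (fun x => (Real.exp (-1/γ)/γ) ^ (γ-2) * (y-x) ^ (γ-2)) x) (Iic (0:ℝ)) := by
  have h2θ : 0 < 2*θ := by linarith
  exact ((expIic_integrable h2θ).const_mul _).add (ind_integrable hγ0 hγ1 hθ hy)

include hγ0 hγ1 hθ in
lemma Ffun_le_sing {y : ℝ} (hy : 0 < y) :
    Ffun γ θ y ≤ (1 - Real.exp (-1/γ)) ^ (2*γ-2) * (1/(2*θ))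
      + (Real.exp (-1/γ)/γ) ^ (γ-2) * (y ^ (γ-1)/(1-γ)) := by
  have h2θ : 0 < 2*θ := by linarith
  have hK : 0 ≤ (Real.exp (-1/γ)/γ) ^ (γ-2) :=
    Real.rpow_nonneg (by positivity) _
  have step1 : Ffun γ θ y ≤ ∫ x in Iic (0:ℝ),
      ((1 - Real.exp (-1/γ)) ^ (2*γ-2) * Real.exp (2*θ*x)
      + (Icc (-1:ℝ) 0).indicator
          (fun x => (Real.exp (-1/γ)/γ) ^ (γ-2) * (y-x) ^ (γ-2)) x) :=
    setIntegral_mono_on (gfun_integrableOn hγ0 hγ1 hθ hy) (bound_integrable hγ0 hγ1 hθ hy)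
      measurableSet_Iic (fun x hx => gfun_le_split hγ0 hγ1 hθ hx hy)
  have step2 : ∫ x in Iic (0:ℝ),
      ((1 - Real.exp (-1/γ)) ^ (2*γ-2) * Real.exp (2*θ*x)
      + (Icc (-1:ℝ) 0).indicator
          (fun x => (Real.exp (-1/γ)/γ) ^ (γ-2) * (y-x) ^ (γ-2)) x)
      = (1 - Real.exp (-1/γ)) ^ (2*γ-2) * (1/(2*θ))
        + (Real.exp (-1/γ)/γ) ^ (γ-2) * ∫ x in Icc (-1:ℝ) 0, (y-x) ^ (γ-2) := by
    rw [MeasureTheory.integral_add ((expIic_integrable h2θ).const_mul _)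
      (ind_integrable hγ0 hγ1 hθ hy)]
    congr 1
    · rw [MeasureTheory.integral_const_mul, expIic_integral h2θ]
    · rw [MeasureTheory.setIntegral_indicator measurableSet_Icc,
        Set.inter_eq_self_of_subset_right Set.Icc_subset_Iic_self,
        MeasureTheory.integral_const_mul]
  have step3 : (Real.exp (-1/γ)/γ) ^ (γ-2) * ∫ x in Icc (-1:ℝ) 0, (y-x) ^ (γ-2)
      ≤ (Real.exp (-1/γ)/γ) ^ (γ-2) * (y ^ (γ-1)/(1-γ)) :=
    mul_le_mul_of_nonneg_left (rho_le hγ0 hγ1 hy) hK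
  calc Ffun γ θ y ≤ _ := step1
    _ = _ := step2
    _ ≤ _ := by linarith

end intF2

section intF3
variable {γ θ : ℝ} (hγ0 : 0 < γ) (hγ1 : γ < 1) (hθ : 0 < θ)

include hγ0 hγ1 hθ in
lemma Ffun_nonneg {y : ℝ} (hy : 0 < y) : 0 ≤ Ffun γ θ y :=
  le_trans (by positivity) (Ffun_ge hγ0 hγ1 hθ hy)

include hγ0 hγ1 hθ in
lemma Ffun_integrableOn_Ioc1 : IntegrableOn (Ffun γ θ) (Ioc (0:ℝ) 1) := by
  have h2θ : 0 < 2*θ := by linarith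
  have hbint : IntegrableOn (fun y : ℝ => (1 - Real.exp (-1/γ)) ^ (2*γ-2) * (1/(2*θ))
      + ((Real.exp (-1/γ)/γ) ^ (γ-2) / (1-γ)) * y ^ (γ-1)) (Ioc (0:ℝ) 1) := by
    apply Integrable.add
    · exact integrableOn_const measure_Ioc_lt_top.ne
    · exact ((intervalIntegral.intervalIntegrable_rpow'
        (by linarith : (-1:ℝ) < γ-1)).1).const_mul _
  refine Integrable.mono' hbint (Ffun_meas.aestronglyMeasurable.restrict) ?_
  filter_upwards [ae_restrict_mem measurableSet_Ioc] with y hy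
  rw [norm_of_nonneg (Ffun_nonneg hγ0 hγ1 hθ hy.1)]
  have := Ffun_le_sing hγ0 hγ1 hθ hy.1
  have heq : (Real.exp (-1/γ)/γ) ^ (γ-2) * (y ^ (γ-1)/(1-γ))
      = ((Real.exp (-1/γ)/γ) ^ (γ-2) / (1-γ)) * y ^ (γ-1) := by ring
  linarith [heq ▸ this]

include hγ0 hγ1 in
lemma Ffun_le_const {y M : ℝ} (hM : 0 < M) (hy : M ≤ y) :
    (1 - Real.exp (-y/γ)) ^ (2*γ-2) ≤ (1 - Real.exp (-M/γ)) ^ (2*γ-2) := by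
  have hbM : 0 < 1 - Real.exp (-M/γ) := by
    have := base_pos (γ := γ) (x := 0) (y := M) hγ0 hM
    simpa using this
  have hle : 1 - Real.exp (-M/γ) ≤ 1 - Real.exp (-y/γ) := by
    have h1 : -y/γ ≤ -M/γ := (div_le_div_iff_of_pos_right hγ0).2 (by linarith)
    have := Real.exp_le_exp.2 h1
    linarith
  exact Real.rpow_le_rpow_of_nonpos hbM hle (by linarith)

include hγ0 hγ1 hθ in
lemma Ffun_integrableOn_IocM (M T : ℝ) (hM : 0 < M) :
    IntegrableOn (Ffun γ θ) (Ioc M T) := by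
  have h2θ : 0 < 2*θ := by linarith
  have hconst : IntegrableOn (fun _ : ℝ => (1 - Real.exp (-M/γ)) ^ (2*γ-2) * (1/(2*θ)))
      (Ioc M T) := integrableOn_const measure_Ioc_lt_top.ne
  refine Integrable.mono' hconst (Ffun_meas.aestronglyMeasurable.restrict) ?_
  filter_upwards [ae_restrict_mem measurableSet_Ioc] with y hy
  have hy0 : 0 < y := lt_trans hM hy.1
  rw [norm_of_nonneg (Ffun_nonneg hγ0 hγ1 hθ hy0)]
  calc Ffun γ θ y ≤ (1 - Real.exp (-y/γ)) ^ (2*γ-2) * (1/(2*θ)) := Ffun_le hγ0 hγ1 hθ hy0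
    _ ≤ (1 - Real.exp (-M/γ)) ^ (2*γ-2) * (1/(2*θ)) :=
        mul_le_mul_of_nonneg_right (Ffun_le_const hγ0 hγ1 hM hy.1.le) (by positivity)

include hγ0 hγ1 hθ in
lemma Ffun_integrableOn (T : ℝ) : IntegrableOn (Ffun γ θ) (Ioc (0:ℝ) T) := by
  refine ((Ffun_integrableOn_Ioc1 hγ0 hγ1 hθ).union
    (Ffun_integrableOn_IocM hγ0 hγ1 hθ 1 T one_pos)).mono_set ?_
  intro z hz
  rcases le_or_gt z 1 with h|h
  · exact Or.inl ⟨hz.1, h⟩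
  · exact Or.inr ⟨h, hz.2⟩

end intF3

theorem stmt_5 (γ θ : ℝ) (hγ0 : 0 < γ) (hγ1 : γ < 1) (hθ : 0 < θ) (hθγ : θ = 1/γ - 1) :
    Tendsto (fun t : ℝ =>
      (Real.exp (-θ * t) *
        ∫ y in Icc (0:ℝ) t, ∫ x in Iic (0:ℝ),
          Real.exp (θ * x) * Real.exp (θ * y) *
            (Real.exp ((y - x) / (2 * γ)) - Real.exp (-(y - x) / (2 * γ))) ^ (2 * γ - 2))
      / (t * Real.exp (-θ * t) / (2 * θ)))
      atTop (nhds 1) := by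
  have h2θ : 0 < 2*θ := by linarith
  set L : ℝ := 1/(2*θ) with hL
  set G : ℝ → ℝ := fun t => ∫ y in Ioc (0:ℝ) t, Ffun γ θ y with hG
  -- Step A : rewrite the double integral
  have hinner : ∀ y : ℝ, 0 ≤ y → (∫ x in Iic (0:ℝ),
      Real.exp (θ * x) * Real.exp (θ * y) *
        (Real.exp ((y - x) / (2 * γ)) - Real.exp (-(y - x) / (2 * γ))) ^ (2 * γ - 2))
      = Ffun γ θ y := by
    intro y hy0
    apply setIntegral_congr_ae measurableSet_Iic
    have hne : {x : ℝ | x ≠ y} ∈ ae (volume : Measure ℝ) := by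
      have : ({y}ᶜ : Set ℝ) ∈ ae (volume : Measure ℝ) :=
        compl_mem_ae_iff.2 (measure_singleton y)
      exact this
    filter_upwards [hne] with x hxne hxIic
    have hxy : x < y := lt_of_le_of_ne (le_trans hxIic hy0) hxne
    exact (key_identity hγ0 hθγ hxy).trans (gfun_eq hγ0 hxy).symm
  have houter : ∀ t : ℝ, (∫ y in Icc (0:ℝ) t, ∫ x in Iic (0:ℝ),
      Real.exp (θ * x) * Real.exp (θ * y) *
        (Real.exp ((y - x) / (2 * γ)) - Real.exp (-(y - x) / (2 * γ))) ^ (2 * γ - 2))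
      = G t := by
    intro t
    rw [show (∫ y in Icc (0:ℝ) t, ∫ x in Iic (0:ℝ),
        Real.exp (θ * x) * Real.exp (θ * y) *
          (Real.exp ((y - x) / (2 * γ)) - Real.exp (-(y - x) / (2 * γ))) ^ (2 * γ - 2))
        = ∫ y in Icc (0:ℝ) t, Ffun γ θ y from
      setIntegral_congr_fun measurableSet_Icc (fun y hy => hinner y hy.1)]
    rw [hG, MeasureTheory.integral_Icc_eq_integral_Ioc]
  -- bounds on G
  have hG_low : ∀ t : ℝ, 0 < t → L * t ≤ G t := by
    intro t ht
    have h1 : ∫ y in Ioc (0:ℝ) t, L ≤ G t :=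
      setIntegral_mono_on (integrableOn_const measure_Ioc_lt_top.ne)
        (Ffun_integrableOn hγ0 hγ1 hθ t) measurableSet_Ioc
        (fun y hy => Ffun_ge hγ0 hγ1 hθ hy.1)
    rw [setIntegral_const, Real.volume_real_Ioc_of_le (by linarith), smul_eq_mul] at h1
    calc L * t = (t - 0) * L := by ring
      _ ≤ G t := h1
  have hcM1 : ∀ M : ℝ, 0 < M → 1 ≤ (1 - Real.exp (-M/γ)) ^ (2*γ-2) := by
    intro M hM
    have hb : 0 < 1 - Real.exp (-M/γ) := by
      have := base_pos (γ := γ) (x := 0) (y := M) hγ0 hM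
      simpa using this
    refine Real.one_le_rpow_of_pos_of_le_one_of_nonpos hb ?_ (by linarith)
    nlinarith [Real.exp_pos (-M/γ)]
  have hG_up : ∀ M t : ℝ, 0 < M → M ≤ t →
      G t ≤ (∫ y in Ioc (0:ℝ) M, Ffun γ θ y)
        + (t - M) * ((1 - Real.exp (-M/γ)) ^ (2*γ-2) * L) := by
    intro M t hM hMt
    have hsplit : G t = (∫ y in Ioc (0:ℝ) M, Ffun γ θ y)
        + ∫ y in Ioc M t, Ffun γ θ y := by
      show (∫ y in Ioc (0:ℝ) t, Ffun γ θ y) = _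
      rw [← Set.Ioc_union_Ioc_eq_Ioc hM.le hMt]
      exact setIntegral_union (Set.Ioc_disjoint_Ioc_of_le le_rfl) measurableSet_Ioc
        (Ffun_integrableOn hγ0 hγ1 hθ M) (Ffun_integrableOn_IocM hγ0 hγ1 hθ M t hM)
    have hup : ∫ y in Ioc M t, Ffun γ θ y
        ≤ (t - M) * ((1 - Real.exp (-M/γ)) ^ (2*γ-2) * L) := by
      have h1 : ∫ y in Ioc M t, Ffun γ θ y
          ≤ ∫ y in Ioc M t, (1 - Real.exp (-M/γ)) ^ (2*γ-2) * L := by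
        apply setIntegral_mono_on (Ffun_integrableOn_IocM hγ0 hγ1 hθ M t hM)
          (integrableOn_const measure_Ioc_lt_top.ne) measurableSet_Ioc
        intro y hy
        have hy0 : 0 < y := lt_trans hM hy.1
        calc Ffun γ θ y ≤ (1 - Real.exp (-y/γ)) ^ (2*γ-2) * L := Ffun_le hγ0 hγ1 hθ hy0
          _ ≤ (1 - Real.exp (-M/γ)) ^ (2*γ-2) * L :=
            mul_le_mul_of_nonneg_right (Ffun_le_const hγ0 hγ1 hM hy.1.le) (by positivity)
      rw [setIntegral_const, Real.volume_real_Ioc_of_le (by linarith), smul_eq_mul] at h1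
      exact h1
    linarith
  -- the limit of the main quantity
  have hmain : Tendsto (fun t : ℝ => 2*θ * G t / t) atTop (nhds 1) := by
    rw [Metric.tendsto_atTop]
    intro ε hε
    -- choose M
    have hcM : Tendsto (fun M : ℝ => (1 - Real.exp (-M/γ)) ^ (2*γ-2)) atTop (nhds 1) := by
      have hb : Tendsto (fun M : ℝ => 1 - Real.exp (-M/γ)) atTop (nhds 1) := by
        have h1 : Tendsto (fun M : ℝ => -M/γ) atTop atBot := by
          have hneg : -(1/γ) < 0 := by
            have : 0 < 1/γ := by positivity
            linarith
          have : Tendsto (fun M : ℝ => M * (-(1/γ))) atTop atBot :=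
            Tendsto.atTop_mul_const_of_neg hneg tendsto_id
          exact this.congr (fun M => by field_simp)
        have h2 := Real.tendsto_exp_atBot.comp h1
        have h3 := (tendsto_const_nhds : Tendsto (fun _ : ℝ => (1:ℝ)) atTop (nhds 1)).sub h2
        simpa using h3
      have := hb.rpow_const (p := 2*γ-2) (Or.inl one_ne_zero)
      simpa using this
    obtain ⟨M0, hM0⟩ := (Metric.tendsto_atTop.1 hcM) (ε/3) (by linarith)
    set M : ℝ := max M0 1 with hM
    have hM1 : (1:ℝ) ≤ M := le_max_right _ _
    have hMpos : 0 < M := lt_of_lt_of_le one_pos hM1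
    have hMlt : (1 - Real.exp (-M/γ)) ^ (2*γ-2) < 1 + ε/3 := by
      have := hM0 M (le_max_left _ _)
      rw [Real.dist_eq, abs_lt] at this
      linarith [this.2]
    set cM : ℝ := (1 - Real.exp (-M/γ)) ^ (2*γ-2) with hcMdef
    set C : ℝ := ∫ y in Ioc (0:ℝ) M, Ffun γ θ y with hC
    have hC0 : 0 ≤ C := by
      rw [hC]
      apply setIntegral_nonneg measurableSet_Ioc
      intro y hy
      exact Ffun_nonneg hγ0 hγ1 hθ hy.1
    refine ⟨max (M + 1) (6*θ*C/ε + 1), fun t ht => ?_⟩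
    have htM : M ≤ t := by
      have := le_trans (le_max_left (M+1) (6*θ*C/ε + 1)) ht
      linarith
    have ht0 : 0 < t := lt_of_lt_of_le hMpos htM
    have htC : 2*θ*C ≤ (ε/3)*t := by
      have h1 : 6*θ*C/ε + 1 ≤ t := le_trans (le_max_right _ _) ht
      have h2 : 6*θ*C/ε ≤ t - 1 := by linarith
      have h3 : 6*θ*C ≤ (t-1)*ε := by
        rw [div_le_iff₀ hε] at h2
        linarith
      nlinarith
    have hlow := hG_low t ht0
    have hup := hG_up M t hMpos htM
    have hcMge := hcM1 M hMpos
    have hLval : 2*θ*L = 1 := by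
      rw [hL]; field_simp
    rw [← hC] at hup
    rw [Real.dist_eq, abs_lt]
    have hpsi_ge : 1 ≤ 2*θ*G t/t := by
      apply (one_le_div ht0).2
      nlinarith [mul_le_mul_of_nonneg_left hlow h2θ.le]
    have hpsi_le : 2*θ*G t/t < 1 + ε := by
      rw [div_lt_iff₀ ht0]
      have hA := mul_le_mul_of_nonneg_left hup h2θ.le
      have e1 : 2*θ*(C + (t-M)*((1 - Real.exp (-M/γ)) ^ (2*γ-2)*L))
          = 2*θ*C + (t-M)*cM * (2*θ*L) := by rw [hcMdef]; ring
      rw [hLval, mul_one] at e1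
      have hC1 : (t-M)*cM ≤ t*cM :=
        mul_le_mul_of_nonneg_right (by linarith) (by linarith)
      have hD : t*cM < t*(1+ε/3) := mul_lt_mul_of_pos_left hMlt ht0
      nlinarith
    constructor
    · linarith
    · linarith
  -- transfer
  have heq : ∀ᶠ t : ℝ in atTop, 2*θ * G t / t =
      (Real.exp (-θ * t) *
        ∫ y in Icc (0:ℝ) t, ∫ x in Iic (0:ℝ),
          Real.exp (θ * x) * Real.exp (θ * y) *
            (Real.exp ((y - x) / (2 * γ)) - Real.exp (-(y - x) / (2 * γ))) ^ (2 * γ - 2))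
      / (t * Real.exp (-θ * t) / (2 * θ)) := by
    filter_upwards [eventually_gt_atTop (0:ℝ)] with t ht
    rw [houter t]
    have hexp : Real.exp (-θ*t) ≠ 0 := (Real.exp_pos _).ne'
    field_simp
  exact hmain.congr' heq
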